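/- Define the Melnikov function M : (0,∞) → ℝ by M(ω) := 2πω / sinh(πω/2). Then for every ω ∈ (0,1], the first and second derivatives of M satisfy |M'(ω)| ≤ 4 and |M''(ω)| ≤ 7/2. -/

import Mathlib

open Real

namespace Melnikov

lemma nonneg_of_deriv {F F' : ℝ → ℝ} (hd : ∀ x, HasDerivAt F (F' x) x)
    (h0 : 0 ≤ F 0) (hF' : ∀ x, 0 ≤ x → x ≤ 3.15 → 0 ≤ F' x) :
    ∀ x, 0 ≤ x → x ≤ 3.15 → 0 ≤ F x := by
  intro x hx hx'
  have hdiff : Differentiable ℝ F := fun y => (hd y).differentiableAt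
  have hmono : MonotoneOn F (Set.Icc (0:ℝ) 3.15) := by
    apply monotoneOn_of_deriv_nonneg (convex_Icc _ _) hdiff.continuous.continuousOn
      (fun y _ => (hdiff y).differentiableWithinAt)
    intro y hy
    rw [interior_Icc] at hy
    rw [(hd y).deriv]
    exact hF' y hy.1.le hy.2.le
  have := hmono (Set.mem_Icc.2 ⟨le_refl 0, by norm_num⟩) (Set.mem_Icc.2 ⟨hx, hx'⟩) hx
  linarith

lemma U0 (x : ℝ) (h0 : 0 ≤ x) (h1 : x ≤ 3.15) : Real.cosh x ≤ 12.4 := by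
  have he1 : Real.exp 1 < 2.7182818286 := Real.exp_one_lt_d9
  have hx3 : Real.exp x ≤ Real.exp 3.15 := Real.exp_le_exp.2 h1
  have h315 : Real.exp 3.15 ≤ 23.8 := by
    have h3 : Real.exp 3 ≤ 2.7182818286 ^ 3 := by
      rw [show (3:ℝ) = 1 + 1 + 1 by norm_num, Real.exp_add, Real.exp_add]
      nlinarith [Real.exp_pos 1, he1.le]
    have h015 : Real.exp 0.15 ≤ 1 / 0.85 := by
      have := Real.add_one_le_exp (-0.15 : ℝ)
      have hp := Real.exp_pos (0.15 : ℝ)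
      rw [Real.exp_neg] at this
      rw [div_eq_mul_inv, one_mul, ← inv_inv (Real.exp 0.15)]
      apply inv_anti₀ (by norm_num)
      linarith
    calc Real.exp 3.15 = Real.exp 3 * Real.exp 0.15 := by
          rw [← Real.exp_add]; norm_num
      _ ≤ 2.7182818286 ^ 3 * (1/0.85) := by
          apply mul_le_mul h3 h015 (Real.exp_pos _).le (by positivity)
      _ ≤ 23.8 := by norm_num
  have hxneg : Real.exp (-x) ≤ 1 := Real.exp_le_one_iff.2 (by linarith)
  rw [Real.cosh_eq]
  linarith

lemma U1 (x : ℝ) (h0 : 0 ≤ x) (h1 : x ≤ 3.15) : Real.sinh x ≤ 12.4 * x := by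
  have h := nonneg_of_deriv (F := fun x => 12.4 * x - Real.sinh x)
      (F' := fun x => 12.4 - Real.cosh x)
      (fun y => by
        exact (((hasDerivAt_id y).const_mul (12.4:ℝ)).sub (Real.hasDerivAt_sinh y)).congr_deriv (by simp))
      (by norm_num)
      (fun y hy hy' => by have := U0 y hy hy'; linarith)
  have := h x h0 h1; linarith

lemma U2 (x : ℝ) (h0 : 0 ≤ x) (h1 : x ≤ 3.15) : Real.cosh x ≤ 1 + 12.4*x^2/2 := by
  have h := nonneg_of_deriv (F := fun x => 1 + 12.4*x^2/2 - Real.cosh x)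
      (F' := fun y => 12.4*2*y/2 - Real.sinh y)
      (fun y => by
        have H := ((hasDerivAt_const y (1:ℝ)).add (((hasDerivAt_pow 2 y).const_mul (12.4:ℝ)).div_const 2)).sub (Real.hasDerivAt_cosh y)
        refine H.congr_deriv ?_
        try norm_num
        try ring)
      (by norm_num)
      (fun y hy hy' => by have := U1 y hy hy'; linarith)
  have := h x h0 h1; linarith

lemma U3 (x : ℝ) (h0 : 0 ≤ x) (h1 : x ≤ 3.15) : Real.sinh x ≤ x + 12.4*x^3/6 := by
  have h := nonneg_of_deriv (F := fun x => x + 12.4*x^3/6 - Real.sinh x)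
      (F' := fun y => 1 + 12.4*3*y^2/6 - Real.cosh y)
      (fun y => by
        have H := ((hasDerivAt_id y).add (((hasDerivAt_pow 3 y).const_mul (12.4:ℝ)).div_const 6)).sub (Real.hasDerivAt_sinh y)
        refine H.congr_deriv ?_
        try norm_num
        try ring)
      (by norm_num)
      (fun y hy hy' => by have := U2 y hy hy'; linarith)
  have := h x h0 h1; linarith

lemma U4 (x : ℝ) (h0 : 0 ≤ x) (h1 : x ≤ 3.15) : Real.cosh x ≤ 1 + x^2/2 + 12.4*x^4/24 := by
  have h := nonneg_of_deriv (F := fun x => 1 + x^2/2 + 12.4*x^4/24 - Real.cosh x)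
      (F' := fun y => 2*y/2 + 12.4*4*y^3/24 - Real.sinh y)
      (fun y => by
        have H := (((hasDerivAt_const y (1:ℝ)).add ((hasDerivAt_pow 2 y).div_const 2)).add (((hasDerivAt_pow 4 y).const_mul (12.4:ℝ)).div_const 24)).sub (Real.hasDerivAt_cosh y)
        refine H.congr_deriv ?_
        try norm_num
        try ring)
      (by norm_num)
      (fun y hy hy' => by have := U3 y hy hy'; linarith)
  have := h x h0 h1; linarith

lemma U5 (x : ℝ) (h0 : 0 ≤ x) (h1 : x ≤ 3.15) : Real.sinh x ≤ x + x^3/6 + 12.4*x^5/120 := by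
  have h := nonneg_of_deriv (F := fun x => x + x^3/6 + 12.4*x^5/120 - Real.sinh x)
      (F' := fun y => 1 + 3*y^2/6 + 12.4*5*y^4/120 - Real.cosh y)
      (fun y => by
        have H := (((hasDerivAt_id y).add ((hasDerivAt_pow 3 y).div_const 6)).add (((hasDerivAt_pow 5 y).const_mul (12.4:ℝ)).div_const 120)).sub (Real.hasDerivAt_sinh y)
        refine H.congr_deriv ?_
        try norm_num
        try ring)
      (by norm_num)
      (fun y hy hy' => by have := U4 y hy hy'; linarith)
  have := h x h0 h1; linarith

lemma U6 (x : ℝ) (h0 : 0 ≤ x) (h1 : x ≤ 3.15) : Real.cosh x ≤ 1 + x^2/2 + x^4/24 + 12.4*x^6/720 := by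
  have h := nonneg_of_deriv (F := fun x => 1 + x^2/2 + x^4/24 + 12.4*x^6/720 - Real.cosh x)
      (F' := fun y => 2*y/2 + 4*y^3/24 + 12.4*6*y^5/720 - Real.sinh y)
      (fun y => by
        have H := ((((hasDerivAt_const y (1:ℝ)).add ((hasDerivAt_pow 2 y).div_const 2)).add ((hasDerivAt_pow 4 y).div_const 24)).add (((hasDerivAt_pow 6 y).const_mul (12.4:ℝ)).div_const 720)).sub (Real.hasDerivAt_cosh y)
        refine H.congr_deriv ?_
        try norm_num
        try ring)
      (by norm_num)
      (fun y hy hy' => by have := U5 y hy hy'; linarith)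
  have := h x h0 h1; linarith

lemma U7 (x : ℝ) (h0 : 0 ≤ x) (h1 : x ≤ 3.15) : Real.sinh x ≤ x + x^3/6 + x^5/120 + 12.4*x^7/5040 := by
  have h := nonneg_of_deriv (F := fun x => x + x^3/6 + x^5/120 + 12.4*x^7/5040 - Real.sinh x)
      (F' := fun y => 1 + 3*y^2/6 + 5*y^4/120 + 12.4*7*y^6/5040 - Real.cosh y)
      (fun y => by
        have H := ((((hasDerivAt_id y).add ((hasDerivAt_pow 3 y).div_const 6)).add ((hasDerivAt_pow 5 y).div_const 120)).add (((hasDerivAt_pow 7 y).const_mul (12.4:ℝ)).div_const 5040)).sub (Real.hasDerivAt_sinh y)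
        refine H.congr_deriv ?_
        try norm_num
        try ring)
      (by norm_num)
      (fun y hy hy' => by have := U6 y hy hy'; linarith)
  have := h x h0 h1; linarith

lemma U8 (x : ℝ) (h0 : 0 ≤ x) (h1 : x ≤ 3.15) : Real.cosh x ≤ 1 + x^2/2 + x^4/24 + x^6/720 + 12.4*x^8/40320 := by
  have h := nonneg_of_deriv (F := fun x => 1 + x^2/2 + x^4/24 + x^6/720 + 12.4*x^8/40320 - Real.cosh x)
      (F' := fun y => 2*y/2 + 4*y^3/24 + 6*y^5/720 + 12.4*8*y^7/40320 - Real.sinh y)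
      (fun y => by
        have H := (((((hasDerivAt_const y (1:ℝ)).add ((hasDerivAt_pow 2 y).div_const 2)).add ((hasDerivAt_pow 4 y).div_const 24)).add ((hasDerivAt_pow 6 y).div_const 720)).add (((hasDerivAt_pow 8 y).const_mul (12.4:ℝ)).div_const 40320)).sub (Real.hasDerivAt_cosh y)
        refine H.congr_deriv ?_
        try norm_num
        try ring)
      (by norm_num)
      (fun y hy hy' => by have := U7 y hy hy'; linarith)
  have := h x h0 h1; linarith

lemma U9 (x : ℝ) (h0 : 0 ≤ x) (h1 : x ≤ 3.15) : Real.sinh x ≤ x + x^3/6 + x^5/120 + x^7/5040 + 12.4*x^9/362880 := by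
  have h := nonneg_of_deriv (F := fun x => x + x^3/6 + x^5/120 + x^7/5040 + 12.4*x^9/362880 - Real.sinh x)
      (F' := fun y => 1 + 3*y^2/6 + 5*y^4/120 + 7*y^6/5040 + 12.4*9*y^8/362880 - Real.cosh y)
      (fun y => by
        have H := (((((hasDerivAt_id y).add ((hasDerivAt_pow 3 y).div_const 6)).add ((hasDerivAt_pow 5 y).div_const 120)).add ((hasDerivAt_pow 7 y).div_const 5040)).add (((hasDerivAt_pow 9 y).const_mul (12.4:ℝ)).div_const 362880)).sub (Real.hasDerivAt_sinh y)
        refine H.congr_deriv ?_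
        try norm_num
        try ring)
      (by norm_num)
      (fun y hy hy' => by have := U8 y hy hy'; linarith)
  have := h x h0 h1; linarith

lemma U10 (x : ℝ) (h0 : 0 ≤ x) (h1 : x ≤ 3.15) : Real.cosh x ≤ 1 + x^2/2 + x^4/24 + x^6/720 + x^8/40320 + 12.4*x^10/3628800 := by
  have h := nonneg_of_deriv (F := fun x => 1 + x^2/2 + x^4/24 + x^6/720 + x^8/40320 + 12.4*x^10/3628800 - Real.cosh x)
      (F' := fun y => 2*y/2 + 4*y^3/24 + 6*y^5/720 + 8*y^7/40320 + 12.4*10*y^9/3628800 - Real.sinh y)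
      (fun y => by
        have H := ((((((hasDerivAt_const y (1:ℝ)).add ((hasDerivAt_pow 2 y).div_const 2)).add ((hasDerivAt_pow 4 y).div_const 24)).add ((hasDerivAt_pow 6 y).div_const 720)).add ((hasDerivAt_pow 8 y).div_const 40320)).add (((hasDerivAt_pow 10 y).const_mul (12.4:ℝ)).div_const 3628800)).sub (Real.hasDerivAt_cosh y)
        refine H.congr_deriv ?_
        try norm_num
        try ring)
      (by norm_num)
      (fun y hy hy' => by have := U9 y hy hy'; linarith)
  have := h x h0 h1; linarith

lemma U11 (x : ℝ) (h0 : 0 ≤ x) (h1 : x ≤ 3.15) : Real.sinh x ≤ x + x^3/6 + x^5/120 + x^7/5040 + x^9/362880 + 12.4*x^11/39916800 := by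
  have h := nonneg_of_deriv (F := fun x => x + x^3/6 + x^5/120 + x^7/5040 + x^9/362880 + 12.4*x^11/39916800 - Real.sinh x)
      (F' := fun y => 1 + 3*y^2/6 + 5*y^4/120 + 7*y^6/5040 + 9*y^8/362880 + 12.4*11*y^10/39916800 - Real.cosh y)
      (fun y => by
        have H := ((((((hasDerivAt_id y).add ((hasDerivAt_pow 3 y).div_const 6)).add ((hasDerivAt_pow 5 y).div_const 120)).add ((hasDerivAt_pow 7 y).div_const 5040)).add ((hasDerivAt_pow 9 y).div_const 362880)).add (((hasDerivAt_pow 11 y).const_mul (12.4:ℝ)).div_const 39916800)).sub (Real.hasDerivAt_sinh y)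
        refine H.congr_deriv ?_
        try norm_num
        try ring)
      (by norm_num)
      (fun y hy hy' => by have := U10 y hy hy'; linarith)
  have := h x h0 h1; linarith

lemma L1 (x : ℝ) (h0 : 0 ≤ x) (h1 : x ≤ 3.15) : x ≤ Real.sinh x := by
  have h := nonneg_of_deriv (F := fun x => Real.sinh x - (x))
      (F' := fun y => Real.cosh y - (1))
      (fun y => by
        have H := (Real.hasDerivAt_sinh y).sub (hasDerivAt_id y)
        refine H.congr_deriv ?_
        try norm_num
        try ring)
      (by norm_num)
      (fun y hy hy' => by have := Real.one_le_cosh y; linarith)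
  have := h x h0 h1; linarith

lemma L2 (x : ℝ) (h0 : 0 ≤ x) (h1 : x ≤ 3.15) : 1 + x^2/2 ≤ Real.cosh x := by
  have h := nonneg_of_deriv (F := fun x => Real.cosh x - (1 + x^2/2))
      (F' := fun y => Real.sinh y - (2*y/2))
      (fun y => by
        have H := (Real.hasDerivAt_cosh y).sub ((hasDerivAt_const y (1:ℝ)).add ((hasDerivAt_pow 2 y).div_const 2))
        refine H.congr_deriv ?_
        try norm_num
        try ring)
      (by norm_num)
      (fun y hy hy' => by have := L1 y hy hy'; linarith)
  have := h x h0 h1; linarith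

lemma L3 (x : ℝ) (h0 : 0 ≤ x) (h1 : x ≤ 3.15) : x + x^3/6 ≤ Real.sinh x := by
  have h := nonneg_of_deriv (F := fun x => Real.sinh x - (x + x^3/6))
      (F' := fun y => Real.cosh y - (1 + 3*y^2/6))
      (fun y => by
        have H := (Real.hasDerivAt_sinh y).sub ((hasDerivAt_id y).add ((hasDerivAt_pow 3 y).div_const 6))
        refine H.congr_deriv ?_
        try norm_num
        try ring)
      (by norm_num)
      (fun y hy hy' => by have := L2 y hy hy'; linarith)
  have := h x h0 h1; linarith

lemma L4 (x : ℝ) (h0 : 0 ≤ x) (h1 : x ≤ 3.15) : 1 + x^2/2 + x^4/24 ≤ Real.cosh x := by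
  have h := nonneg_of_deriv (F := fun x => Real.cosh x - (1 + x^2/2 + x^4/24))
      (F' := fun y => Real.sinh y - (2*y/2 + 4*y^3/24))
      (fun y => by
        have H := (Real.hasDerivAt_cosh y).sub (((hasDerivAt_const y (1:ℝ)).add ((hasDerivAt_pow 2 y).div_const 2)).add ((hasDerivAt_pow 4 y).div_const 24))
        refine H.congr_deriv ?_
        try norm_num
        try ring)
      (by norm_num)
      (fun y hy hy' => by have := L3 y hy hy'; linarith)
  have := h x h0 h1; linarith

lemma L5 (x : ℝ) (h0 : 0 ≤ x) (h1 : x ≤ 3.15) : x + x^3/6 + x^5/120 ≤ Real.sinh x := by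
  have h := nonneg_of_deriv (F := fun x => Real.sinh x - (x + x^3/6 + x^5/120))
      (F' := fun y => Real.cosh y - (1 + 3*y^2/6 + 5*y^4/120))
      (fun y => by
        have H := (Real.hasDerivAt_sinh y).sub (((hasDerivAt_id y).add ((hasDerivAt_pow 3 y).div_const 6)).add ((hasDerivAt_pow 5 y).div_const 120))
        refine H.congr_deriv ?_
        try norm_num
        try ring)
      (by norm_num)
      (fun y hy hy' => by have := L4 y hy hy'; linarith)
  have := h x h0 h1; linarith

lemma L6 (x : ℝ) (h0 : 0 ≤ x) (h1 : x ≤ 3.15) : 1 + x^2/2 + x^4/24 + x^6/720 ≤ Real.cosh x := by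
  have h := nonneg_of_deriv (F := fun x => Real.cosh x - (1 + x^2/2 + x^4/24 + x^6/720))
      (F' := fun y => Real.sinh y - (2*y/2 + 4*y^3/24 + 6*y^5/720))
      (fun y => by
        have H := (Real.hasDerivAt_cosh y).sub ((((hasDerivAt_const y (1:ℝ)).add ((hasDerivAt_pow 2 y).div_const 2)).add ((hasDerivAt_pow 4 y).div_const 24)).add ((hasDerivAt_pow 6 y).div_const 720))
        refine H.congr_deriv ?_
        try norm_num
        try ring)
      (by norm_num)
      (fun y hy hy' => by have := L5 y hy hy'; linarith)
  have := h x h0 h1; linarith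

lemma L7 (x : ℝ) (h0 : 0 ≤ x) (h1 : x ≤ 3.15) : x + x^3/6 + x^5/120 + x^7/5040 ≤ Real.sinh x := by
  have h := nonneg_of_deriv (F := fun x => Real.sinh x - (x + x^3/6 + x^5/120 + x^7/5040))
      (F' := fun y => Real.cosh y - (1 + 3*y^2/6 + 5*y^4/120 + 7*y^6/5040))
      (fun y => by
        have H := (Real.hasDerivAt_sinh y).sub ((((hasDerivAt_id y).add ((hasDerivAt_pow 3 y).div_const 6)).add ((hasDerivAt_pow 5 y).div_const 120)).add ((hasDerivAt_pow 7 y).div_const 5040))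
        refine H.congr_deriv ?_
        try norm_num
        try ring)
      (by norm_num)
      (fun y hy hy' => by have := L6 y hy hy'; linarith)
  have := h x h0 h1; linarith

lemma L8 (x : ℝ) (h0 : 0 ≤ x) (h1 : x ≤ 3.15) : 1 + x^2/2 + x^4/24 + x^6/720 + x^8/40320 ≤ Real.cosh x := by
  have h := nonneg_of_deriv (F := fun x => Real.cosh x - (1 + x^2/2 + x^4/24 + x^6/720 + x^8/40320))
      (F' := fun y => Real.sinh y - (2*y/2 + 4*y^3/24 + 6*y^5/720 + 8*y^7/40320))
      (fun y => by
        have H := (Real.hasDerivAt_cosh y).sub (((((hasDerivAt_const y (1:ℝ)).add ((hasDerivAt_pow 2 y).div_const 2)).add ((hasDerivAt_pow 4 y).div_const 24)).add ((hasDerivAt_pow 6 y).div_const 720)).add ((hasDerivAt_pow 8 y).div_const 40320))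
        refine H.congr_deriv ?_
        try norm_num
        try ring)
      (by norm_num)
      (fun y hy hy' => by have := L7 y hy hy'; linarith)
  have := h x h0 h1; linarith

lemma L9 (x : ℝ) (h0 : 0 ≤ x) (h1 : x ≤ 3.15) : x + x^3/6 + x^5/120 + x^7/5040 + x^9/362880 ≤ Real.sinh x := by
  have h := nonneg_of_deriv (F := fun x => Real.sinh x - (x + x^3/6 + x^5/120 + x^7/5040 + x^9/362880))
      (F' := fun y => Real.cosh y - (1 + 3*y^2/6 + 5*y^4/120 + 7*y^6/5040 + 9*y^8/362880))
      (fun y => by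
        have H := (Real.hasDerivAt_sinh y).sub (((((hasDerivAt_id y).add ((hasDerivAt_pow 3 y).div_const 6)).add ((hasDerivAt_pow 5 y).div_const 120)).add ((hasDerivAt_pow 7 y).div_const 5040)).add ((hasDerivAt_pow 9 y).div_const 362880))
        refine H.congr_deriv ?_
        try norm_num
        try ring)
      (by norm_num)
      (fun y hy hy' => by have := L8 y hy hy'; linarith)
  have := h x h0 h1; linarith

lemma lemA (x : ℝ) (h0 : 0 ≤ x) (h1 : x ≤ 3.15) : 0 ≤ x * Real.cosh x - Real.sinh x := by
  have h := nonneg_of_deriv (F := fun x => x * Real.cosh x - Real.sinh x)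
      (F' := fun y => y * Real.sinh y)
      (fun y => by
        have H := ((hasDerivAt_id y).mul (Real.hasDerivAt_cosh y)).sub (Real.hasDerivAt_sinh y)
        refine H.congr_deriv ?_
        try norm_num
        try ring)
      (by norm_num)
      (fun y hy hy' => by exact mul_nonneg hy (Real.sinh_nonneg_iff.2 hy))
  have := h x h0 h1; linarith

lemma lemB (x : ℝ) (h0 : 0 ≤ x) (h1 : x ≤ 3.15) :
    x * Real.cosh x - Real.sinh x ≤ x^3/3 + x^5/30 + 12.4*x^7/840 := by
  have h := nonneg_of_deriv
      (F := fun x => x^3/3 + x^5/30 + 12.4*x^7/840 - (x * Real.cosh x - Real.sinh x))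
      (F' := fun y => 3*y^2/3 + 5*y^4/30 + 12.4*(7*y^6)/840 - y * Real.sinh y)
      (fun y => by
        have H := ((((hasDerivAt_pow 3 y).div_const 3).add ((hasDerivAt_pow 5 y).div_const 30)).add
            (((hasDerivAt_pow 7 y).const_mul (12.4:ℝ)).div_const 840)).sub
            (((hasDerivAt_id y).mul (Real.hasDerivAt_cosh y)).sub (Real.hasDerivAt_sinh y))
        refine H.congr_deriv ?_
        try norm_num
        try ring)
      (by norm_num)
      (fun y hy hy' => by
        have h5 := U5 y hy hy'
        nlinarith [mul_nonneg hy (sub_nonneg.2 h5)])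
  have := h x h0 h1; linarith

noncomputable def Mg (x : ℝ) : ℝ :=
  (2*π*Real.sinh (π*x/2) - π^2*x*Real.cosh (π*x/2)) / (Real.sinh (π*x/2))^2

lemma hasDerivAt_inner (x : ℝ) : HasDerivAt (fun x : ℝ => π * x / 2) (π/2) x := by
  have := ((hasDerivAt_id x).const_mul π).div_const 2
  refine this.congr_deriv ?_
  · ring

lemma hasDerivAt_M (x : ℝ) (hx : 0 < x) :
    HasDerivAt (fun x : ℝ => 2 * π * x / Real.sinh (π * x / 2)) (Mg x) x := by
  have hs : 0 < Real.sinh (π*x/2) := Real.sinh_pos_iff.2 (by positivity)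
  have hv : HasDerivAt (fun x : ℝ => Real.sinh (π * x / 2))
      (Real.cosh (π*x/2) * (π/2)) x := (hasDerivAt_inner x).sinh
  have hu : HasDerivAt (fun x : ℝ => 2 * π * x) (2*π) x := by
    simpa using (hasDerivAt_id x).const_mul (2*π)
  have := hu.div hv hs.ne'
  refine this.congr_deriv ?_
  unfold Mg
  rw [div_eq_div_iff (by positivity) (by positivity)]
  ring

lemma deriv_M (x : ℝ) (hx : 0 < x) :
    deriv (fun x : ℝ => 2 * π * x / Real.sinh (π * x / 2)) x = Mg x :=
  (hasDerivAt_M x hx).deriv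

lemma hasDerivAt_Mg (x : ℝ) (hx : 0 < x) :
    HasDerivAt Mg
      ((π^3*x*(Real.cosh (π*x/2))^2 - π^3/2*x*(Real.sinh (π*x/2))^2
        - 2*π^2*Real.sinh (π*x/2)*Real.cosh (π*x/2)) / (Real.sinh (π*x/2))^3) x := by
  have hs : 0 < Real.sinh (π*x/2) := Real.sinh_pos_iff.2 (by positivity)
  have hv : HasDerivAt (fun x : ℝ => Real.sinh (π * x / 2))
      (Real.cosh (π*x/2) * (π/2)) x := (hasDerivAt_inner x).sinh
  have hc : HasDerivAt (fun x : ℝ => Real.cosh (π * x / 2))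
      (Real.sinh (π*x/2) * (π/2)) x := (hasDerivAt_inner x).cosh
  have h1 : HasDerivAt (fun x : ℝ => π^2*x) (π^2) x := by
    simpa using (hasDerivAt_id x).const_mul (π^2)
  have hnum : HasDerivAt (fun x : ℝ => 2*π*Real.sinh (π*x/2) - π^2*x*Real.cosh (π*x/2))
      (2*π*(Real.cosh (π*x/2) * (π/2))
        - (π^2*Real.cosh (π*x/2) + (π^2*x)*(Real.sinh (π*x/2) * (π/2)))) x :=
    (hv.const_mul (2*π)).sub (h1.mul hc)
  have hden : HasDerivAt (fun x : ℝ => (Real.sinh (π*x/2))^2)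
      (2 * (Real.sinh (π*x/2))^(2-1) * (Real.cosh (π*x/2) * (π/2))) x := by
    exact_mod_cast hv.pow 2
  have := hnum.div hden (by positivity)
  refine this.congr_deriv ?_
  rw [div_eq_div_iff (by positivity) (by positivity)]
  push_cast
  ring

lemma key1 (u : ℝ) (h0 : 0 < u) (h1 : u ≤ 1.5708) (hπ : π ≤ 3.1416) :
    2*π*(u^3/3 + u^5/30 + 12.4*u^7/840) ≤ 4*(u + u^3/6)^2 := by
  have hsq : u^2 ≤ 2.4675 := by nlinarith [mul_nonneg (sub_nonneg.2 h1) h0.le]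
  have hcube : u^3 ≤ 3.8759 := by nlinarith [mul_nonneg (sub_nonneg.2 hsq) h0.le]
  have hstuff : (0:ℝ) ≤ u^3/3 + u^5/30 + 12.4*u^7/840 := by positivity
  nlinarith [mul_nonneg (sub_nonneg.2 hπ) hstuff,
    mul_nonneg (sub_nonneg.2 hcube) (pow_nonneg h0.le 4),
    mul_nonneg (sub_nonneg.2 h1) (pow_nonneg h0.le 4),
    mul_nonneg (sq_nonneg (u - 1.624)) (sq_nonneg u)]
set_option maxHeartbeats 1000000 in
lemma key2 (u : ℝ) (h0 : 0 < u) (h1 : u ≤ 1.5708) (hπ : π ≤ 3.1416) :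
    |2*u*(Real.cosh u)^2 - u*(Real.sinh u)^2 - 2*Real.sinh u*Real.cosh u| ≤ 7/(2*π^2) * u^3 := by
  have hπ0 := Real.pi_pos
  have hid : 2*u*(Real.cosh u)^2 - u*(Real.sinh u)^2 - 2*Real.sinh u*Real.cosh u
      = (2*u)/4*Real.cosh (2*u) + 3*(2*u)/4 - Real.sinh (2*u) := by
    rw [Real.cosh_two_mul, Real.sinh_two_mul]
    linear_combination (3*u/2) * (Real.cosh_sq_sub_sinh_sq u)
  rw [hid]
  set v := 2*u with hv
  have hv0 : 0 < v := by positivity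
  have hv1 : v ≤ 3.1416 := by rw [hv]; linarith
  have hv315 : v ≤ 3.15 := by linarith
  have h2 : v^2 ≤ 9.8697 := by nlinarith [mul_nonneg (sub_nonneg.2 hv1) hv0.le]
  have h4 : v^4 ≤ 97.42 := by nlinarith [mul_nonneg (sub_nonneg.2 h2) (sq_nonneg v), sq_nonneg v]
  have h6 : v^6 ≤ 961.6 := by nlinarith [mul_nonneg (sub_nonneg.2 h4) (sq_nonneg v), sq_nonneg v]
  have h8 : v^8 ≤ 9492 := by nlinarith [mul_nonneg (sub_nonneg.2 h6) (sq_nonneg v), sq_nonneg v]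
  have hcoshU := U10 v hv0.le hv315
  have hsinhL := L9 v hv0.le hv315
  have hsinhU := U11 v hv0.le hv315
  have hcoshL := L8 v hv0.le hv315
  have hπsq : π^2 ≤ 9.8697 := by nlinarith
  have hKv : 0.0443 * v^3 ≤ 7/(2*π^2) * u^3 := by
    rw [div_mul_eq_mul_div, le_div_iff₀ (by positivity), hv]
    nlinarith [pow_pos h0 3, mul_nonneg (sub_nonneg.2 hπsq) (pow_nonneg h0.le 3)]
  have f1 : v*Real.cosh v ≤ v*(1 + v^2/2 + v^4/24 + v^6/720 + v^8/40320 + 12.4*v^10/3628800) :=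
    mul_le_mul_of_nonneg_left hcoshU hv0.le
  have f2 := mul_le_mul_of_nonneg_right h2 (pow_nonneg hv0.le 3)
  have f3 := mul_le_mul_of_nonneg_right h4 (pow_nonneg hv0.le 3)
  have f4 := mul_le_mul_of_nonneg_right h6 (pow_nonneg hv0.le 3)
  have f5 := mul_le_mul_of_nonneg_right h8 (pow_nonneg hv0.le 3)
  have hub : v/4*Real.cosh v + 3*v/4 - Real.sinh v ≤ 0.0443*v^3 := by
    linarith [f1, hsinhL, f2, f3, f4, f5]
  have g1 : v*(1 + v^2/2 + v^4/24 + v^6/720 + v^8/40320) ≤ v*Real.cosh v :=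
    mul_le_mul_of_nonneg_left hcoshL hv0.le
  have g2 := mul_le_mul_of_nonneg_right h6 (pow_nonneg hv0.le 5)
  have hlb : Real.sinh v - (v/4*Real.cosh v + 3*v/4) ≤ 0.0443*v^3 := by
    linarith [hsinhU, g1, g2, pow_nonneg hv0.le 7, pow_nonneg hv0.le 9, pow_nonneg hv0.le 3]
  exact abs_le.2 ⟨by linarith, by linarith⟩

lemma main1 (u : ℝ) (h0 : 0 < u) (h1 : u ≤ 1.5708) (hπ : π ≤ 3.1416) :
    |(2*π*Real.sinh u - 2*π*u*Real.cosh u) / (Real.sinh u)^2| ≤ 4 := by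
  have h315 : u ≤ 3.15 := by linarith
  have hs : 0 < Real.sinh u := Real.sinh_pos_iff.2 h0
  have hA := lemA u h0.le h315
  have hB := lemB u h0.le h315
  have hL3 := L3 u h0.le h315
  have hk := key1 u h0 h1 hπ
  rw [abs_div, abs_of_pos (pow_pos hs 2), div_le_iff₀ (pow_pos hs 2)]
  have habs : |2*π*Real.sinh u - 2*π*u*Real.cosh u| = 2*π*(u*Real.cosh u - Real.sinh u) := by
    rw [abs_of_nonpos (by nlinarith [mul_nonneg Real.pi_pos.le hA])]
    ring
  rw [habs]
  have step1 : 2*π*(u*Real.cosh u - Real.sinh u) ≤ 2*π*(u^3/3+u^5/30+12.4*u^7/840) :=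
    mul_le_mul_of_nonneg_left hB (by positivity)
  have step2 : 4*(u+u^3/6)^2 ≤ 4*(Real.sinh u)^2 := by
    nlinarith [mul_nonneg (sub_nonneg.2 hL3) (add_nonneg hs.le (by positivity : (0:ℝ) ≤ u+u^3/6))]
  linarith

lemma main2 (u : ℝ) (h0 : 0 < u) (h1 : u ≤ 1.5708) (hπ : π ≤ 3.1416) :
    |(2*π^2*u*(Real.cosh u)^2 - π^2*u*(Real.sinh u)^2 - 2*π^2*Real.sinh u*Real.cosh u)
      / (Real.sinh u)^3| ≤ 7/2 := by
  have h315 : u ≤ 3.15 := by linarith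
  have hs : 0 < Real.sinh u := Real.sinh_pos_iff.2 h0
  have hsl := L1 u h0.le h315
  have hk := key2 u h0 h1 hπ
  rw [abs_div, abs_of_pos (pow_pos hs 3), div_le_iff₀ (pow_pos hs 3)]
  have e : 2*π^2*u*(Real.cosh u)^2 - π^2*u*(Real.sinh u)^2 - 2*π^2*Real.sinh u*Real.cosh u
      = π^2*(2*u*(Real.cosh u)^2 - u*(Real.sinh u)^2 - 2*Real.sinh u*Real.cosh u) := by ring
  rw [e, abs_mul, abs_of_pos (by positivity : (0:ℝ) < π^2)]
  have hstep : π^2 * |2*u*(Real.cosh u)^2 - u*(Real.sinh u)^2 - 2*Real.sinh u*Real.cosh u|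
      ≤ π^2 * (7/(2*π^2)*u^3) := mul_le_mul_of_nonneg_left hk (by positivity)
  have heq : π^2 * (7/(2*π^2)*u^3) = 7/2*u^3 := by
    field_simp
  have hcube : 7/2*u^3 ≤ 7/2*(Real.sinh u)^3 := by
    nlinarith [pow_le_pow_left₀ h0.le hsl 3]
  linarith

end Melnikov

/-- The Melnikov function M(ω) = 2πω / sinh(πω/2) satisfies |M'(ω)| ≤ 4 and |M''(ω)| ≤ 7/2
for every ω ∈ (0,1]. -/
theorem melnikov_deriv_bounds (ω : ℝ) (hω : ω ∈ Set.Ioc (0:ℝ) 1) :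
    |deriv (fun x : ℝ => 2 * π * x / Real.sinh (π * x / 2)) ω| ≤ 4 ∧
    |deriv (deriv (fun x : ℝ => 2 * π * x / Real.sinh (π * x / 2))) ω| ≤ 7/2 := by
  obtain ⟨hω0, hω1⟩ := hω
  have hπ0 := Real.pi_pos
  have hπu : π ≤ 3.1416 := by nlinarith [Real.pi_lt_d6]
  have h0u : 0 < π * ω / 2 := by positivity
  have h1u : π * ω / 2 ≤ 1.5708 := by nlinarith [mul_nonneg (sub_nonneg.2 hω1) hπ0.le]
  constructor
  · rw [Melnikov.deriv_M ω hω0]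
    have e1 : Melnikov.Mg ω = (2*π*Real.sinh (π*ω/2) - 2*π*(π*ω/2)*Real.cosh (π*ω/2))
        / (Real.sinh (π*ω/2))^2 := by
      unfold Melnikov.Mg
      ring_nf
    rw [e1]
    exact Melnikov.main1 _ h0u h1u hπu
  · have hev : deriv (fun x : ℝ => 2 * π * x / Real.sinh (π * x / 2)) =ᶠ[nhds ω] Melnikov.Mg :=
      Filter.eventuallyEq_of_mem (isOpen_Ioi.mem_nhds hω0) (fun x hx => Melnikov.deriv_M x hx)
    rw [hev.deriv_eq, (Melnikov.hasDerivAt_Mg ω hω0).deriv]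
    have e2 : (π^3*ω*(Real.cosh (π*ω/2))^2 - π^3/2*ω*(Real.sinh (π*ω/2))^2
          - 2*π^2*Real.sinh (π*ω/2)*Real.cosh (π*ω/2)) / (Real.sinh (π*ω/2))^3
        = (2*π^2*(π*ω/2)*(Real.cosh (π*ω/2))^2 - π^2*(π*ω/2)*(Real.sinh (π*ω/2))^2
          - 2*π^2*Real.sinh (π*ω/2)*Real.cosh (π*ω/2)) / (Real.sinh (π*ω/2))^3 := by
      ring_nf
    rw [e2]
    exact Melnikov.main2 _ h0u h1u hπu
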